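/- arXiv:math/9903160 — 3 statements merged into one kernel-verified Lean document; each statement's English description precedes it below -/
import Mathlib

section
/- In the two-day surprise exam, knowledge of the announcement on the eve of the second day rules out a second-day exam: let Q1, Q2 : Prop and Kb : Prop → Prop satisfy factivity (∀ p, Kb p → p) and distribution (∀ p q, Kb (p ∧ q) → Kb p ∧ Kb q; ∀ p q, Kb (p → q) → Kb p → Kb q), and additionally Kb (Q1 ∨ Q2) → Kb (¬Q1) → Kb Q2. Let A denote the announcement (Q1 → ¬ Ka Q1) ∧ (Q2 → ¬ Kb Q2 ∧ Kb (¬Q1)) ∧ (Q1 ∨ Q2) for some operator Ka. Then Kb A → ¬ Q2. -/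
theorem surprise_exam_no_second_day (Q1 Q2 : Prop) (Ka Kb : Prop → Prop)
    (hfact : ∀ p : Prop, Kb p → p)
    (hdistAnd : ∀ p q : Prop, Kb (p ∧ q) → Kb p ∧ Kb q)
    (hdistImp : ∀ p q : Prop, Kb (p → q) → Kb p → Kb q)
    (hor : Kb (Q1 ∨ Q2) → Kb (¬Q1) → Kb Q2) :
    Kb ((Q1 → ¬ Ka Q1) ∧ (Q2 → ¬ Kb Q2 ∧ Kb (¬Q1)) ∧ (Q1 ∨ Q2)) → ¬ Q2 := by
  intro hA hQ2
  obtain ⟨_, h2⟩ := hdistAnd _ _ hA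
  obtain ⟨_, hKor⟩ := hdistAnd _ _ h2
  obtain ⟨_, h2', _⟩ := hfact _ hA
  obtain ⟨hnKb, hKnQ1⟩ := h2' hQ2
  exact hnKb (hor hKor hKnQ1)
end

section
/- Propositional shadow of Fitch's Gödelized surprise exam: work in a Hilbert-style system for classical propositional logic extended with a unary modal operator P, whose derivability relation ⊢ is closed under necessitation (if ⊢ φ then ⊢ P φ). Let Q1, Q2, S be formulas such that ⊢ S ↔ ((Q1 ∧ ¬ P (S → Q1)) XOR (Q2 ∧ ¬ P ((S ∧ ¬ Q1) → Q2))), where XOR denotes exclusive disjunction. Then ⊢ ¬ S. -/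
/-- A Hilbert-style system for classical propositional logic extended with a
unary modal operator `P` ("provable"), whose derivability predicate `Prv` is
closed under modus ponens and necessitation. -/
structure ModalHilbertSystem where
  Form : Type
  imp : Form → Form → Form
  and : Form → Form → Form
  or : Form → Form → Form
  not : Form → Form
  P : Form → Form
  Prv : Form → Prop
  mp : ∀ φ ψ, Prv (imp φ ψ) → Prv φ → Prv ψ
  nec : ∀ φ, Prv φ → Prv (P φ)
  ax_k : ∀ φ ψ, Prv (imp φ (imp ψ φ))
  ax_s : ∀ φ ψ χ, Prv (imp (imp φ (imp ψ χ)) (imp (imp φ ψ) (imp φ χ)))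
  ax_dne : ∀ φ, Prv (imp (not (not φ)) φ)
  ax_not_elim : ∀ φ ψ, Prv (imp φ (imp (not φ) ψ))
  ax_not_intro : ∀ φ, Prv (imp (imp φ (not φ)) (not φ))
  ax_and_intro : ∀ φ ψ, Prv (imp φ (imp ψ (and φ ψ)))
  ax_and_left : ∀ φ ψ, Prv (imp (and φ ψ) φ)
  ax_and_right : ∀ φ ψ, Prv (imp (and φ ψ) ψ)
  ax_or_inl : ∀ φ ψ, Prv (imp φ (or φ ψ))
  ax_or_inr : ∀ φ ψ, Prv (imp ψ (or φ ψ))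
  ax_or_elim : ∀ φ ψ χ, Prv (imp (imp φ χ) (imp (imp ψ χ) (imp (or φ ψ) χ)))

/-- Biconditional, defined from the primitive connectives. -/
def ModalHilbertSystem.iff (M : ModalHilbertSystem) (φ ψ : M.Form) : M.Form :=
  M.and (M.imp φ ψ) (M.imp ψ φ)

/-- Exclusive disjunction, defined from the primitive connectives. -/
def ModalHilbertSystem.xor (M : ModalHilbertSystem) (φ ψ : M.Form) : M.Form :=
  M.or (M.and φ (M.not ψ)) (M.and (M.not φ) ψ)

namespace FitchAux

variable {M : ModalHilbertSystem}

inductive Der (M : ModalHilbertSystem) : List M.Form → M.Form → Prop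
  | hyp {Γ φ} : φ ∈ Γ → Der M Γ φ
  | thm {Γ φ} : M.Prv φ → Der M Γ φ
  | mp {Γ φ ψ} : Der M Γ (M.imp φ ψ) → Der M Γ φ → Der M Γ ψ

theorem ded_aux {Δ : List M.Form} {ψ} (h : Der M Δ ψ) :
    ∀ φ Γ, Δ = φ :: Γ → Der M Γ (M.imp φ ψ) := by
  induction h with
  | hyp hmem =>
      intro φ Γ hE
      subst hE
      rcases List.mem_cons.mp hmem with rfl | hm
      · rename_i χ
        exact Der.mp (Der.mp (Der.thm (M.ax_s χ (M.imp χ χ) χ))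
          (Der.thm (M.ax_k χ (M.imp χ χ)))) (Der.thm (M.ax_k χ χ))
      · exact Der.mp (Der.thm (M.ax_k _ φ)) (Der.hyp hm)
  | thm h =>
      intro φ Γ _
      exact Der.mp (Der.thm (M.ax_k _ φ)) (Der.thm h)
  | mp _ _ ih1 ih2 =>
      intro φ Γ hE
      exact Der.mp (Der.mp (Der.thm (M.ax_s _ _ _)) (ih1 φ Γ hE)) (ih2 φ Γ hE)

theorem ded {Γ : List M.Form} {φ ψ} (h : Der M (φ :: Γ) ψ) : Der M Γ (M.imp φ ψ) :=
  ded_aux h φ Γ rfl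

theorem closed_aux {Δ : List M.Form} {φ} (h : Der M Δ φ) : Δ = [] → M.Prv φ := by
  induction h with
  | hyp hmem => intro hE; subst hE; exact absurd hmem List.not_mem_nil
  | thm h => intro _; exact h
  | mp _ _ ih1 ih2 => intro hE; exact M.mp _ _ (ih1 hE) (ih2 hE)

theorem closed {φ : M.Form} (h : Der M [] φ) : M.Prv φ := closed_aux h rfl

theorem dand_left {Γ : List M.Form} {φ ψ} (h : Der M Γ (M.and φ ψ)) : Der M Γ φ :=
  Der.mp (Der.thm (M.ax_and_left φ ψ)) h

theorem dand_right {Γ : List M.Form} {φ ψ} (h : Der M Γ (M.and φ ψ)) : Der M Γ ψ :=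
  Der.mp (Der.thm (M.ax_and_right φ ψ)) h

theorem dnot_elim {Γ : List M.Form} {φ} (ψ : M.Form) (h1 : Der M Γ φ)
    (h2 : Der M Γ (M.not φ)) : Der M Γ ψ :=
  Der.mp (Der.mp (Der.thm (M.ax_not_elim φ ψ)) h1) h2

theorem dnot_intro {Γ : List M.Form} {φ} (h : Der M (φ :: Γ) (M.not φ)) :
    Der M Γ (M.not φ) :=
  Der.mp (Der.thm (M.ax_not_intro φ)) (ded h)

theorem dor_elim {Γ : List M.Form} {φ ψ χ} (h : Der M Γ (M.or φ ψ))
    (h1 : Der M (φ :: Γ) χ) (h2 : Der M (ψ :: Γ) χ) : Der M Γ χ :=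
  Der.mp (Der.mp (Der.mp (Der.thm (M.ax_or_elim φ ψ χ)) (ded h1)) (ded h2)) h

theorem dhyp0 {Γ : List M.Form} {φ} : Der M (φ :: Γ) φ := Der.hyp List.mem_cons_self

theorem dhyp1 {Γ : List M.Form} {φ ψ} : Der M (ψ :: φ :: Γ) φ :=
  Der.hyp (List.mem_cons_of_mem _ List.mem_cons_self)

end FitchAux

open FitchAux in
theorem fitch_surprise_exam' (M : ModalHilbertSystem) (Q1 Q2 S : M.Form)
    (hS : M.Prv (M.iff S
      (M.xor (M.and Q1 (M.not (M.P (M.imp S Q1))))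
             (M.and Q2 (M.not (M.P (M.imp (M.and S (M.not Q1)) Q2))))))) :
    M.Prv (M.not S) := by
  set A := M.and Q1 (M.not (M.P (M.imp S Q1))) with hA
  set B := M.and Q2 (M.not (M.P (M.imp (M.and S (M.not Q1)) Q2))) with hB
  have hSX : M.Prv (M.imp S (M.xor A B)) :=
    M.mp _ _ (M.ax_and_left _ _) hS
  -- a reusable derivation of X := A xor B from hypothesis S in any context containing S
  have getX : ∀ Γ : List M.Form, S ∈ Γ → Der M Γ (M.or (M.and A (M.not B)) (M.and (M.not A) B)) :=
    fun Γ hmem => Der.mp (Der.thm hSX) (Der.hyp hmem)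
  -- Step 1 : ⊢ (S ∧ ¬Q1) → Q2
  have step1 : M.Prv (M.imp (M.and S (M.not Q1)) Q2) := by
    apply closed; apply ded
    have hSd : Der M [M.and S (M.not Q1)] S := dand_left dhyp0
    have hnQ1 : Der M [M.and S (M.not Q1)] (M.not Q1) := dand_right dhyp0
    refine dor_elim (Der.mp (Der.thm hSX) hSd) ?_ ?_
    · -- case A ∧ ¬B : Q1 contradicts ¬Q1
      exact dnot_elim Q2 (dand_left (dand_left dhyp0)) (dand_right dhyp1)
    · exact dand_left (dand_right dhyp0)
  have p1 : M.Prv (M.P (M.imp (M.and S (M.not Q1)) Q2)) := M.nec _ step1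
  -- ⊢ ¬B
  have notB : M.Prv (M.not B) := by
    apply closed
    apply dnot_intro
    exact dnot_elim (M.not B) (Der.thm p1) (dand_right dhyp0)
  -- Step 2 : ⊢ S → Q1
  have step2 : M.Prv (M.imp S Q1) := by
    apply closed; apply ded
    refine dor_elim (getX [S] List.mem_cons_self) ?_ ?_
    · exact dand_left (dand_left dhyp0)
    · exact dnot_elim Q1 (dand_right dhyp0) (Der.thm notB)
  have p2 : M.Prv (M.P (M.imp S Q1)) := M.nec _ step2
  -- ⊢ ¬A
  have notA : M.Prv (M.not A) := by
    apply closed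
    apply dnot_intro
    exact dnot_elim (M.not A) (Der.thm p2) (dand_right dhyp0)
  -- finish : ⊢ ¬S
  apply closed
  apply dnot_intro
  refine dor_elim (getX [S] List.mem_cons_self) ?_ ?_
  · exact dnot_elim (M.not S) (dand_left dhyp0) (Der.thm notA)
  · exact dnot_elim (M.not S) (dand_right dhyp0) (Der.thm notB)


theorem fitch_surprise_exam (M : ModalHilbertSystem) (Q1 Q2 S : M.Form)
    (hS : M.Prv (M.iff S
      (M.xor (M.and Q1 (M.not (M.P (M.imp S Q1))))
             (M.and Q2 (M.not (M.P (M.imp (M.and S (M.not Q1)) Q2))))))) :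
    M.Prv (M.not S) := fitch_surprise_exam' M Q1 Q2 S hS
end

section
/- First step of Fitch's argument: with hypotheses as in the previous statement (classical propositional logic with operator P closed under necessitation, and ⊢ S ↔ ((Q1 ∧ ¬ P (S → Q1)) XOR (Q2 ∧ ¬ P ((S ∧ ¬ Q1) → Q2)))), one has ⊢ (S ∧ ¬ Q1) → Q2 and consequently ⊢ S → Q1. -/
namespace ModalHilbertSystem

variable (M : ModalHilbertSystem)

/-- Derivability of `φ` from a list of hypotheses `Γ` (nested implications,
head of the list is the innermost/most recent hypothesis). -/
def Der (Γ : List M.Form) (φ : M.Form) : Prop :=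
  M.Prv (Γ.foldl (fun acc γ => M.imp γ acc) φ)

variable {M}

theorem Der.toPrv {φ : M.Form} (h : M.Der [] φ) : M.Prv φ := h

theorem Der.intro {Γ : List M.Form} {γ φ : M.Form}
    (h : M.Der (γ :: Γ) φ) : M.Der Γ (M.imp γ φ) := h

theorem Der.elim' {Γ : List M.Form} {γ φ : M.Form}
    (h : M.Der Γ (M.imp γ φ)) : M.Der (γ :: Γ) φ := h

/-- Lift a theorem into any context. -/
theorem Der.ofPrv {φ : M.Form} (h : M.Prv φ) : ∀ Γ : List M.Form, M.Der Γ φ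
  | [] => h
  | γ :: Γ => Der.elim' (Der.ofPrv (M.mp _ _ (M.ax_k φ γ) h) Γ)

/-- Modus ponens under a context. -/
theorem Der.mp : ∀ {Γ : List M.Form} {φ ψ : M.Form},
    M.Der Γ (M.imp φ ψ) → M.Der Γ φ → M.Der Γ ψ
  | [], _, _, h1, h2 => M.mp _ _ h1 h2
  | γ :: Γ, φ, ψ, h1, h2 => by
      have h1' : M.Der Γ (M.imp γ (M.imp φ ψ)) := h1
      have h2' : M.Der Γ (M.imp γ φ) := h2
      have hs : M.Der Γ (M.imp (M.imp γ (M.imp φ ψ)) (M.imp (M.imp γ φ) (M.imp γ ψ))) :=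
        Der.ofPrv (M.ax_s γ φ ψ) Γ
      exact Der.elim' (Der.mp (Der.mp hs h1') h2')

theorem Der.imp_self (Γ : List M.Form) (φ : M.Form) : M.Der Γ (M.imp φ φ) := by
  have h1 := M.ax_s φ (M.imp φ φ) φ
  have h2 := M.mp _ _ h1 (M.ax_k φ (M.imp φ φ))
  exact Der.ofPrv (M.mp _ _ h2 (M.ax_k φ φ)) Γ

/-- The most recent hypothesis is derivable. -/
theorem Der.hyp (Γ : List M.Form) (φ : M.Form) : M.Der (φ :: Γ) φ :=
  Der.elim' (Der.imp_self Γ φ)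

/-- Weakening by one extra hypothesis. -/
theorem Der.weak {Γ : List M.Form} {φ : M.Form} (ψ : M.Form)
    (h : M.Der Γ φ) : M.Der (ψ :: Γ) φ :=
  Der.elim' (Der.mp (Der.ofPrv (M.ax_k φ ψ) Γ) h)

theorem Der.notElim {Γ : List M.Form} {φ : M.Form} (ψ : M.Form)
    (h1 : M.Der Γ φ) (h2 : M.Der Γ (M.not φ)) : M.Der Γ ψ :=
  Der.mp (Der.mp (Der.ofPrv (M.ax_not_elim φ ψ) Γ) h1) h2

theorem Der.andLeft {Γ : List M.Form} {φ ψ : M.Form}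
    (h : M.Der Γ (M.and φ ψ)) : M.Der Γ φ :=
  Der.mp (Der.ofPrv (M.ax_and_left φ ψ) Γ) h

theorem Der.andRight {Γ : List M.Form} {φ ψ : M.Form}
    (h : M.Der Γ (M.and φ ψ)) : M.Der Γ ψ :=
  Der.mp (Der.ofPrv (M.ax_and_right φ ψ) Γ) h

theorem Der.orElim {Γ : List M.Form} {φ ψ χ : M.Form}
    (h : M.Der Γ (M.or φ ψ))
    (h1 : M.Der Γ (M.imp φ χ)) (h2 : M.Der Γ (M.imp ψ χ)) : M.Der Γ χ :=
  Der.mp (Der.mp (Der.mp (Der.ofPrv (M.ax_or_elim φ ψ χ) Γ) h1) h2) h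

end ModalHilbertSystem

theorem fitch_first_step (M : ModalHilbertSystem) (Q1 Q2 S : M.Form)
    (hS : M.Prv (M.iff S
      (M.xor (M.and Q1 (M.not (M.P (M.imp S Q1))))
             (M.and Q2 (M.not (M.P (M.imp (M.and S (M.not Q1)) Q2))))))) :
    M.Prv (M.imp (M.and S (M.not Q1)) Q2) ∧ M.Prv (M.imp S Q1) := by
  set A := M.and Q1 (M.not (M.P (M.imp S Q1))) with hA
  set B := M.and Q2 (M.not (M.P (M.imp (M.and S (M.not Q1)) Q2))) with hB
  have hSX : M.Prv (M.imp S (M.xor A B)) :=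
    M.mp _ _ (M.ax_and_left _ _) hS
  open ModalHilbertSystem in
  have step1 : M.Prv (M.imp (M.and S (M.not Q1)) Q2) := by
    apply Der.toPrv
    apply Der.intro (Γ := [])
    set Γ : List M.Form := [M.and S (M.not Q1)] with hΓ
    have hhyp : M.Der Γ (M.and S (M.not Q1)) := Der.hyp [] _
    have hs : M.Der Γ S := hhyp.andLeft
    have hnq1 : M.Der Γ (M.not Q1) := hhyp.andRight
    have hx : M.Der Γ (M.or (M.and A (M.not B)) (M.and (M.not A) B)) :=
      Der.mp (Der.ofPrv hSX Γ) hs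
    refine Der.orElim hx ?_ ?_
    · apply Der.intro
      have hq1 : M.Der (M.and A (M.not B) :: Γ) Q1 :=
        ((Der.hyp Γ _).andLeft : M.Der _ A).andLeft
      exact hq1.notElim Q2 (hnq1.weak _)
    · apply Der.intro
      exact ((Der.hyp Γ _).andRight : M.Der (M.and (M.not A) B :: Γ) B).andLeft
  refine ⟨step1, ?_⟩
  have hP : M.Prv (M.P (M.imp (M.and S (M.not Q1)) Q2)) := M.nec _ step1
  open ModalHilbertSystem in
  apply Der.toPrv
  apply Der.intro (Γ := [])
  set Γ : List M.Form := [S] with hΓ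
  have hs : M.Der Γ S := Der.hyp [] _
  have hx : M.Der Γ (M.or (M.and A (M.not B)) (M.and (M.not A) B)) :=
    Der.mp (Der.ofPrv hSX Γ) hs
  refine Der.orElim hx ?_ ?_
  · apply Der.intro
    exact ((Der.hyp Γ _).andLeft : M.Der (M.and A (M.not B) :: Γ) A).andLeft
  · apply Der.intro
    have hb : M.Der (M.and (M.not A) B :: Γ) B := (Der.hyp Γ _).andRight
    exact (Der.ofPrv hP _).notElim Q1 hb.andRight
end
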